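/- arXiv:1507.03450 — 4 statements merged into one kernel-verified Lean document; each statement's English description precedes it below -/
import Mathlib

section
/- Every point of the surface D_3: Δ_3 = 0 in P^3 has multiplicity at most 2, where Δ_3 = b^2c^2 - 4ac^3 - 4b^3d + 18abcd - 27a^2d^2. Equivalently, at the point [0:0:0:1] (corresponding to y^3) the polynomial Δ_3, written in local affine coordinates with d = 1, has a nonzero quadratic part (its lowest-degree homogeneous part has degree 2). -/
open MvPolynomial

lemma aux_comp (n : ℕ) :
    homogeneousComponent n ((X 1 ^ 2 * X 2 ^ 2 - 4 * X 0 * X 2 ^ 3 - 4 * X 1 ^ 3 +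
      18 * X 0 * X 1 * X 2 - 27 * X 0 ^ 2 : MvPolynomial (Fin 3) ℂ)) =
    (if n = 4 then X 1 ^ 2 * X 2 ^ 2 else 0) - (if n = 4 then 4 * X 0 * X 2 ^ 3 else 0)
    - (if n = 3 then 4 * X 1 ^ 3 else 0) + (if n = 3 then 18 * X 0 * X 1 * X 2 else 0)
    - (if n = 2 then 27 * X 0 ^ 2 else 0) := by
  have h1 : (X 1 ^ 2 * X 2 ^ 2 : MvPolynomial (Fin 3) ℂ) ∈ homogeneousSubmodule (Fin 3) ℂ 4 :=
    ((isHomogeneous_X _ _).pow 2).mul ((isHomogeneous_X _ _).pow 2)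
  have h2 : (4 * X 0 * X 2 ^ 3 : MvPolynomial (Fin 3) ℂ) ∈ homogeneousSubmodule (Fin 3) ℂ 4 := by
    have : (4 : MvPolynomial (Fin 3) ℂ) = C 4 := by exact (map_ofNat C _).symm
    rw [this]
    exact ((isHomogeneous_C _ _).mul (isHomogeneous_X _ _)).mul ((isHomogeneous_X _ _).pow 3)
  have h3 : (4 * X 1 ^ 3 : MvPolynomial (Fin 3) ℂ) ∈ homogeneousSubmodule (Fin 3) ℂ 3 := by
    have : (4 : MvPolynomial (Fin 3) ℂ) = C 4 := by exact (map_ofNat C _).symm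
    rw [this]
    exact (isHomogeneous_C _ _).mul ((isHomogeneous_X _ _).pow 3)
  have h4 : (18 * X 0 * X 1 * X 2 : MvPolynomial (Fin 3) ℂ) ∈ homogeneousSubmodule (Fin 3) ℂ 3 := by
    have : (18 : MvPolynomial (Fin 3) ℂ) = C 18 := by exact (map_ofNat C _).symm
    rw [this]
    exact (((isHomogeneous_C _ _).mul (isHomogeneous_X _ _)).mul (isHomogeneous_X _ _)).mul
      (isHomogeneous_X _ _)
  have h5 : (27 * X 0 ^ 2 : MvPolynomial (Fin 3) ℂ) ∈ homogeneousSubmodule (Fin 3) ℂ 2 := by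
    have : (27 : MvPolynomial (Fin 3) ℂ) = C 27 := by exact (map_ofNat C _).symm
    rw [this]
    exact (isHomogeneous_C _ _).mul ((isHomogeneous_X _ _).pow 2)
  rw [map_sub, map_add, map_sub, map_sub, homogeneousComponent_of_mem h1,
    homogeneousComponent_of_mem h2, homogeneousComponent_of_mem h3,
    homogeneousComponent_of_mem h4, homogeneousComponent_of_mem h5]

/-- Every point of the surface `𝒟₃ : Δ₃ = 0` has multiplicity at most `2`: at the point
`[0:0:0:1]` (the cube `y³`), the discriminant `Δ₃`, written in affine coordinates with `d = 1`,
has lowest-degree homogeneous part of degree exactly `2`. -/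
theorem stmt9 (P : MvPolynomial (Fin 3) ℂ)
    -- `Δ₃` with `d = 1`, in affine coordinates `(a, b, c)` centered at the point `y³`
    (hP : P = X 1 ^ 2 * X 2 ^ 2 - 4 * X 0 * X 2 ^ 3 - 4 * X 1 ^ 3 + 18 * X 0 * X 1 * X 2 -
      27 * X 0 ^ 2) :
    homogeneousComponent 0 P = 0 ∧ homogeneousComponent 1 P = 0 ∧
      homogeneousComponent 2 P ≠ 0 := by
  subst hP
  refine ⟨?_, ?_, ?_⟩
  · rw [aux_comp]; norm_num
  · rw [aux_comp]; norm_num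
  · rw [aux_comp]
    norm_num
end

section
/- For the polynomial f = x^{d-1}z + y^d + x^{d-2}yw + x^{d-5}y^5 ∈ C[x,y,z,w] with d ≥ 10, the vector r_2 = (x^4, 0, -(d-1)x^3z - (d-2)x^2yw, -(d-5)y^4) is a syzygy of the partial derivatives of f, i.e., x^4·f_x + 0·f_y + (-(d-1)x^3z - (d-2)x^2yw)·f_z + (-(d-5)y^4)·f_w = 0. -/
open MvPolynomial

/-- For `f = x^{d-1}z + y^d + x^{d-2}yw + x^{d-5}y⁵` with `d ≥ 10`, the vector
`r₂ = (x⁴, 0, -(d-1)x³z - (d-2)x²yw, -(d-5)y⁴)` is a syzygy of the partial derivatives of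
`f` (variables `x, y, z, w` are `X 0, X 1, X 2, X 3`). -/
theorem stmt10 (d : ℕ) (hd : 10 ≤ d) (f : MvPolynomial (Fin 4) ℂ)
    (hf : f = X 0 ^ (d - 1) * X 2 + X 1 ^ d + X 0 ^ (d - 2) * X 1 * X 3 +
      X 0 ^ (d - 5) * X 1 ^ 5) :
    X 0 ^ 4 * pderiv 0 f + 0 * pderiv 1 f +
      (-(C ((d : ℂ) - 1) * X 0 ^ 3 * X 2) - C ((d : ℂ) - 2) * X 0 ^ 2 * X 1 * X 3) *
        pderiv 2 f +
      (-(C ((d : ℂ) - 5) * X 1 ^ 4)) * pderiv 3 f = 0 := by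
  subst hf
  obtain ⟨k, rfl⟩ := Nat.exists_eq_add_of_le hd
  have h1 : 10 + k - 1 = 9 + k := by omega
  have h2 : 10 + k - 2 = 8 + k := by omega
  have h5 : 10 + k - 5 = 5 + k := by omega
  rw [h1, h2, h5]
  simp only [map_add, map_mul, map_pow, pderiv_X_self, pderiv_X_of_ne (by decide : (0:Fin 4) ≠ 1),
    pderiv_X_of_ne (by decide : (0:Fin 4) ≠ 2), pderiv_X_of_ne (by decide : (0:Fin 4) ≠ 3),
    pderiv_X_of_ne (by decide : (1:Fin 4) ≠ 0), pderiv_X_of_ne (by decide : (1:Fin 4) ≠ 2),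
    pderiv_X_of_ne (by decide : (1:Fin 4) ≠ 3), pderiv_X_of_ne (by decide : (2:Fin 4) ≠ 0),
    pderiv_X_of_ne (by decide : (2:Fin 4) ≠ 1), pderiv_X_of_ne (by decide : (2:Fin 4) ≠ 3),
    pderiv_X_of_ne (by decide : (3:Fin 4) ≠ 0), pderiv_X_of_ne (by decide : (3:Fin 4) ≠ 1),
    pderiv_X_of_ne (by decide : (3:Fin 4) ≠ 2), pderiv_pow, Derivation.leibniz, smul_eq_mul]
  have e1 : 9 + k - 1 = 8 + k := by omega
  have e2 : 8 + k - 1 = 7 + k := by omega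
  have e5 : 5 + k - 1 = 4 + k := by omega
  rw [e1, e2, e5]
  simp only [map_sub, map_add, map_natCast, map_ofNat, map_one]
  push_cast
  ring
end

section
/- Let 1 ≤ d_1 ≤ d_2 ≤ d_3 with d_1 + d_2 + d_3 = d - 1. Then for all integers k ≥ d + d_3 - 4, the alternating sum C(k+3,3) - 4C(k+4-d,3) + Σ_{j=1}^{3} C(k+4-d-d_j,3) equals ak + b where a = s_1^2 - s_2 and b = 2a - s_1^3 + (3/2)s_1s_2 - (1/2)s_3, with s_1, s_2, s_3 the elementary symmetric functions of d_1, d_2, d_3. -/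
/-- `C(m,3) = m(m-1)(m-2)/6`, extended polynomially to all rationals. -/
def binom3 (m : ℚ) : ℚ := m * (m - 1) * (m - 2) / 6

/-- The Hilbert polynomial of a free surface of degree `d` in `ℙ³` with exponents
`1 ≤ d₁ ≤ d₂ ≤ d₃`, `d₁ + d₂ + d₃ = d - 1`: for all `k ≥ d + d₃ - 4`,
`C(k+3,3) - 4C(k+4-d,3) + ∑ⱼ C(k+4-d-dⱼ,3) = ak + b` with `a = s₁² - s₂` and
`b = 2a - s₁³ + (3/2)s₁s₂ - (1/2)s₃`. -/
theorem stmt15 (d d₁ d₂ d₃ : ℕ) (h1 : 1 ≤ d₁) (h12 : d₁ ≤ d₂) (h23 : d₂ ≤ d₃)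
    (hsum : d₁ + d₂ + d₃ + 1 = d)
    (s₁ s₂ s₃ a b : ℚ) (hs₁ : s₁ = d₁ + d₂ + d₃)
    (hs₂ : s₂ = d₁ * d₂ + d₁ * d₃ + d₂ * d₃) (hs₃ : s₃ = d₁ * d₂ * d₃)
    (ha : a = s₁ ^ 2 - s₂) (hb : b = 2 * a - s₁ ^ 3 + 3 / 2 * s₁ * s₂ - 1 / 2 * s₃) :
    ∀ k : ℤ, (d : ℤ) + d₃ - 4 ≤ k →
      binom3 (k + 3) - 4 * binom3 (k + 4 - d) + binom3 (k + 4 - d - d₁) +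
        binom3 (k + 4 - d - d₂) + binom3 (k + 4 - d - d₃) = a * k + b := by
  intro k _
  subst hsum hs₁ hs₂ hs₃ ha hb
  simp only [binom3]
  push_cast
  ring
end

section
/- Let 1 ≤ d_1 ≤ d_2 ≤ d_3 with d_1 + d_2 + d_3 = d (nearly free case), and set d'_1 = d_1, d'_2 = d_2, d'_3 = d_3 - 1, with a' = s'_1^2 - s'_2 and b' = 2a' - s'_1^3 + (3/2)s'_1 s'_2 - (1/2)s'_3 computed from the elementary symmetric functions s'_i of (d'_1, d'_2, d'_3). Then for all integers k ≥ d + d_3 - 3, C(k+3,3) - 4C(k+4-d,3) + C(k+4-d-d_1,3) + C(k+4-d-d_2,3) + 2C(k+4-d-d_3,3) - C(k+3-d-d_3,3) = (a'-1)k + (b' + d + d_3 - 3). -/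
/-- The Hilbert polynomial of a nearly free surface with exponents `1 ≤ d₁ ≤ d₂ ≤ d₃`,
`d₁ + d₂ + d₃ = d`: with `d'₁ = d₁`, `d'₂ = d₂`, `d'₃ = d₃ - 1` and `a', b'` the free-case
values computed from the elementary symmetric functions of `(d'₁, d'₂, d'₃)`, one has, for
all `k ≥ d + d₃ - 3`,
`C(k+3,3) - 4C(k+4-d,3) + C(k+4-d-d₁,3) + C(k+4-d-d₂,3) + 2C(k+4-d-d₃,3) - C(k+3-d-d₃,3)`
`= (a'-1)k + (b' + d + d₃ - 3)`. -/
theorem stmt19 (d d₁ d₂ d₃ : ℕ) (h1 : 1 ≤ d₁) (h12 : d₁ ≤ d₂) (h23 : d₂ ≤ d₃)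
    (hsum : d₁ + d₂ + d₃ = d)
    (s₁' s₂' s₃' a' b' : ℚ) (hs₁ : s₁' = (d₁ : ℚ) + d₂ + ((d₃ : ℚ) - 1))
    (hs₂ : s₂' = (d₁ : ℚ) * d₂ + d₁ * ((d₃ : ℚ) - 1) + d₂ * ((d₃ : ℚ) - 1))
    (hs₃ : s₃' = (d₁ : ℚ) * d₂ * ((d₃ : ℚ) - 1))
    (ha : a' = s₁' ^ 2 - s₂')
    (hb : b' = 2 * a' - s₁' ^ 3 + 3 / 2 * s₁' * s₂' - 1 / 2 * s₃') :
    ∀ k : ℤ, (d : ℤ) + d₃ - 3 ≤ k →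
      binom3 (k + 3) - 4 * binom3 (k + 4 - d) + binom3 (k + 4 - d - d₁) +
        binom3 (k + 4 - d - d₂) + 2 * binom3 (k + 4 - d - d₃) - binom3 (k + 3 - d - d₃) =
      (a' - 1) * k + (b' + d + d₃ - 3) := by
  subst hsum hs₁ hs₂ hs₃ ha hb
  intro k _
  simp only [binom3]
  push_cast
  ring
end
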